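/- Let M and Δ be n×n real matrices, and suppose there exist κ_M ≥ 1 and γ_M > 0 with γ_M > ρ(M) such that ‖Mᵏ‖ ≤ κ_M γ_Mᵏ for all k ≥ 0. Then for all k ≥ 0, ‖(M+Δ)ᵏ − Mᵏ‖ ≤ k·κ_M²·(κ_M‖Δ‖ + γ_M)^{k−1}·‖Δ‖. -/

import Mathlib

/-- Matrix power perturbation bound: if `‖Mᵏ‖ ≤ κ_M γ_Mᵏ` for all `k`, with `κ_M ≥ 1` and
`γ_M > ρ(M)`, then `‖(M+Δ)ᵏ − Mᵏ‖ ≤ k κ_M² (κ_M‖Δ‖ + γ_M)^(k−1) ‖Δ‖`. -/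
lemma aux_pow_sub_pow {R : Type*} [Ring R] (A B : R) :
    ∀ k : ℕ, A ^ k - B ^ k = ∑ i ∈ Finset.range k, B ^ (k - 1 - i) * (A - B) * A ^ i := by
  intro k
  induction k with
  | zero => simp
  | succ k ih =>
    have h1 : A ^ (k+1) - B ^ (k+1) = B * (A ^ k - B ^ k) + (A - B) * A ^ k := by
      rw [pow_succ', pow_succ']; noncomm_ring
    rw [h1, ih, Finset.mul_sum, Finset.sum_range_succ]
    have h2 : ∀ i ∈ Finset.range k,
        B * (B ^ (k - 1 - i) * (A - B) * A ^ i) = B ^ (k + 1 - 1 - i) * (A - B) * A ^ i := by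
      intro i hi
      rw [Finset.mem_range] at hi
      have : k + 1 - 1 - i = (k - 1 - i) + 1 := by omega
      rw [this, pow_succ']
      ring_nf
      noncomm_ring
    rw [Finset.sum_congr rfl h2]
    congr 1
    have : k + 1 - 1 - k = 0 := by omega
    rw [this, pow_zero, one_mul]


theorem stmt1 {n : ℕ}
    (M Δ : EuclideanSpace ℝ (Fin n) →L[ℝ] EuclideanSpace ℝ (Fin n))
    (κM γM : ℝ) (hκ : 1 ≤ κM) (hγ : 0 < γM)
    (hρ : spectralRadius ℝ M < ENNReal.ofReal γM)
    (hpow : ∀ k : ℕ, ‖M ^ k‖ ≤ κM * γM ^ k) :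
    ∀ k : ℕ, ‖(M + Δ) ^ k - M ^ k‖ ≤ (k : ℝ) * κM ^ 2 * (κM * ‖Δ‖ + γM) ^ (k - 1) * ‖Δ‖ := by
  set A := M + Δ with hA
  set d := ‖Δ‖ with hd
  set β := κM * d + γM with hβ
  have hd0 : 0 ≤ d := norm_nonneg _
  have hκ0 : 0 < κM := lt_of_lt_of_le one_pos hκ
  have hβpos : 0 < β := by positivity
  have hγβ : γM ≤ β := by nlinarith
  have hAB : A - M = Δ := by rw [hA]; abel
  -- Case d = 0
  rcases eq_or_lt_of_le hd0 with hd0' | hdpos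
  · have hΔ0 : Δ = 0 := by rw [← norm_eq_zero]; exact hd0'.symm
    intro k
    rw [hA, hΔ0, add_zero, sub_self, norm_zero, hd, hΔ0, norm_zero]
    simp
  -- main case: d > 0
  have hβγ : β - γM = κM * d := by ring
  have hβγpos : 0 < β - γM := by rw [hβγ]; positivity
  -- Q : ‖A^j‖ ≤ κM * β^j, by strong induction
  have Q : ∀ j : ℕ, ‖A ^ j‖ ≤ κM * β ^ j := by
    intro j
    induction j using Nat.strong_induction_on with
    | _ j ihQ =>
      have hid := aux_pow_sub_pow A M j
      rw [hAB] at hid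
      have h1 : ‖A ^ j - M ^ j‖ ≤ ∑ i ∈ Finset.range j, κM * γM ^ (j - 1 - i) * d * (κM * β ^ i) := by
        rw [hid]
        refine le_trans (norm_sum_le _ _) (Finset.sum_le_sum ?_)
        intro i hi
        rw [Finset.mem_range] at hi
        calc ‖M ^ (j - 1 - i) * Δ * A ^ i‖ ≤ ‖M ^ (j - 1 - i) * Δ‖ * ‖A ^ i‖ := norm_mul_le _ _
          _ ≤ ‖M ^ (j - 1 - i)‖ * ‖Δ‖ * ‖A ^ i‖ :=
              mul_le_mul_of_nonneg_right (norm_mul_le _ _) (norm_nonneg _)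
          _ ≤ κM * γM ^ (j - 1 - i) * d * (κM * β ^ i) := by
              apply mul_le_mul
              · exact mul_le_mul_of_nonneg_right (hpow _) hd0
              · exact ihQ i hi
              · exact norm_nonneg _
              · positivity
      have hgeom : ∑ i ∈ Finset.range j, β ^ i * γM ^ (j - 1 - i) = (β ^ j - γM ^ j) / (β - γM) := by
        rw [eq_div_iff (ne_of_gt hβγpos)]
        exact geom_sum₂_mul β γM j
      have h2 : ∑ i ∈ Finset.range j, κM * γM ^ (j - 1 - i) * d * (κM * β ^ i)
          = κM ^ 2 * d * ((β ^ j - γM ^ j) / (β - γM)) := by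
        rw [← hgeom, Finset.mul_sum]
        apply Finset.sum_congr rfl
        intro i _
        ring
      have h3 : κM ^ 2 * d * ((β ^ j - γM ^ j) / (β - γM)) = κM * (β ^ j - γM ^ j) := by
        rw [hβγ]
        field_simp
      have h4 : ‖A ^ j‖ ≤ ‖M ^ j‖ + ‖A ^ j - M ^ j‖ := by
        have heq : A ^ j = M ^ j + (A ^ j - M ^ j) := by abel
        calc ‖A ^ j‖ = ‖M ^ j + (A ^ j - M ^ j)‖ := by rw [← heq]
          _ ≤ ‖M ^ j‖ + ‖A ^ j - M ^ j‖ := norm_add_le _ _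
      calc ‖A ^ j‖ ≤ ‖M ^ j‖ + ‖A ^ j - M ^ j‖ := h4
        _ ≤ κM * γM ^ j + κM * (β ^ j - γM ^ j) := by
            refine add_le_add (hpow j) ?_
            exact h1.trans_eq (h2.trans h3)
        _ = κM * β ^ j := by ring
  -- final bound
  intro k
  have hid := aux_pow_sub_pow A M k
  rw [hAB] at hid
  rw [hid]
  refine le_trans (norm_sum_le _ _) ?_
  have hterm : ∀ i ∈ Finset.range k,
      ‖M ^ (k - 1 - i) * Δ * A ^ i‖ ≤ κM ^ 2 * β ^ (k - 1) * d := by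
    intro i hi
    rw [Finset.mem_range] at hi
    have hstep : ‖M ^ (k - 1 - i) * Δ * A ^ i‖ ≤ κM * γM ^ (k - 1 - i) * d * (κM * β ^ i) := by
      calc ‖M ^ (k - 1 - i) * Δ * A ^ i‖ ≤ ‖M ^ (k - 1 - i) * Δ‖ * ‖A ^ i‖ := norm_mul_le _ _
        _ ≤ ‖M ^ (k - 1 - i)‖ * ‖Δ‖ * ‖A ^ i‖ :=
            mul_le_mul_of_nonneg_right (norm_mul_le _ _) (norm_nonneg _)
        _ ≤ κM * γM ^ (k - 1 - i) * d * (κM * β ^ i) := by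
            apply mul_le_mul
            · exact mul_le_mul_of_nonneg_right (hpow _) hd0
            · exact Q i
            · exact norm_nonneg _
            · positivity
    refine hstep.trans ?_
    have h5 : γM ^ (k - 1 - i) * β ^ i ≤ β ^ (k - 1) := by
      have h6 : γM ^ (k - 1 - i) ≤ β ^ (k - 1 - i) := pow_le_pow_left₀ hγ.le hγβ _
      calc γM ^ (k - 1 - i) * β ^ i ≤ β ^ (k - 1 - i) * β ^ i :=
            mul_le_mul_of_nonneg_right h6 (by positivity)
        _ = β ^ (k - 1) := by rw [← pow_add]; congr 1; omega
    calc κM * γM ^ (k - 1 - i) * d * (κM * β ^ i)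
        = κM ^ 2 * d * (γM ^ (k - 1 - i) * β ^ i) := by ring
      _ ≤ κM ^ 2 * d * β ^ (k - 1) := mul_le_mul_of_nonneg_left h5 (by positivity)
      _ = κM ^ 2 * β ^ (k - 1) * d := by ring
  refine le_trans (Finset.sum_le_sum hterm) ?_
  rw [Finset.sum_const, Finset.card_range, nsmul_eq_mul]
  exact le_of_eq (by ring)
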